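/- arXiv:2406.06026 — 2 statements merged into one kernel-verified Lean document; each statement's English description precedes it below -/
import Mathlib

section
/- For k > 0 and ω > 1, setting A = exp(ω/k) and B = exp((ω−1)/k), the quantity CS(k) = (1−μ*)/(B−1) − 1/(A−1) is strictly increasing in k, for any fixed μ* satisfying (A−B)/(B(A−1)) < μ* ≤ 1/ω (a condition that must hold for all k under consideration). Equivalently, the derivative (1−μ*)(ω−1)B/(k²(B−1)²) − ωA/(k²(A−1)²) is positive whenever 1−μ* ≥ 1 − 1/ω = ln B/ln A. -/
open Real

lemma sinh_lt_mul_cosh {x : ℝ} (hx : 0 < x) : Real.sinh x < x * Real.cosh x := by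
  have key : StrictMonoOn (fun y : ℝ => y * Real.cosh y - Real.sinh y) (Set.Ici 0) := by
    apply strictMonoOn_of_deriv_pos (convex_Ici 0)
    · fun_prop
    · intro y hy
      rw [interior_Ici] at hy
      have hd : HasDerivAt (fun y : ℝ => y * Real.cosh y - Real.sinh y)
          (1 * Real.cosh y + y * Real.sinh y - Real.cosh y) y :=
        ((hasDerivAt_id y).mul (Real.hasDerivAt_cosh y)).sub (Real.hasDerivAt_sinh y)
      rw [hd.deriv]
      have hy' : 0 < y := hy
      have := Real.sinh_pos_iff.2 hy'
      nlinarith [mul_pos hy' this]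
  have := key (Set.self_mem_Ici) (Set.mem_Ici.2 hx.le) hx
  simpa using this

lemma sinh_div_mono {s t : ℝ} (hs : 0 < s) (hst : s < t) :
    t * Real.sinh s < s * Real.sinh t := by
  have key : StrictMonoOn (fun y : ℝ => Real.sinh y / y) (Set.Ici s) := by
    apply strictMonoOn_of_deriv_pos (convex_Ici s)
    · apply ContinuousOn.div (Real.continuous_sinh.continuousOn) continuousOn_id
      intro y hy; exact (lt_of_lt_of_le hs hy).ne'
    · intro y hy
      rw [interior_Ici] at hy
      have hy0 : 0 < y := hs.trans hy
      have hd : HasDerivAt (fun y : ℝ => Real.sinh y / y)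
          ((Real.cosh y * y - Real.sinh y * 1) / y ^ 2) y :=
        (Real.hasDerivAt_sinh y).div (hasDerivAt_id y) hy0.ne'
      rw [hd.deriv]
      have h1 := sinh_lt_mul_cosh hy0
      have h2 : 0 < y ^ 2 := by positivity
      apply div_pos _ h2
      nlinarith
  have h := key (Set.self_mem_Ici) (Set.mem_Ici.2 hst.le) hst
  simp only [] at h
  rw [div_lt_div_iff₀ hs (hs.trans hst)] at h
  linarith

theorem stmt_2 (ω k μs : ℝ) (hω : 1 < ω) (hk : 0 < k)
    (A B : ℝ) (hA : A = Real.exp (ω / k)) (hB : B = Real.exp ((ω - 1) / k))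
    (hlow : (A - B) / (B * (A - 1)) < μs) (hhigh : μs ≤ 1 / ω) :
    0 < (1 - μs) * (ω - 1) * B / (k ^ 2 * (B - 1) ^ 2)
        - ω * A / (k ^ 2 * (A - 1) ^ 2) := by
  have hω0 : (0:ℝ) < ω := by linarith
  set a : ℝ := ω / k with ha
  set b : ℝ := (ω - 1) / k with hb
  have hb0 : 0 < b := div_pos (by linarith) hk
  have hab : b < a := by rw [ha, hb]; gcongr; linarith
  have ha0 : 0 < a := hb0.trans hab
  -- sinh inequality at half arguments
  have hsinh := sinh_div_mono (by positivity : 0 < b / 2) (by linarith : b / 2 < a / 2)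
  set u : ℝ := Real.exp (a / 2) with hu
  set v : ℝ := Real.exp (b / 2) with hv
  have hu1 : 1 < u := Real.one_lt_exp_iff.mpr (by positivity)
  have hv1 : 1 < v := Real.one_lt_exp_iff.mpr (by positivity)
  have hu0 : (0:ℝ) < u := by rw [hu]; positivity
  have hv0 : (0:ℝ) < v := by rw [hv]; positivity
  have hAu : A = u * u := by
    rw [hA, hu, ← Real.exp_add]; congr 1; ring
  have hBv : B = v * v := by
    rw [hB, hv, ← Real.exp_add]; congr 1; ring
  have hsa : Real.sinh (a / 2) = (u * u - 1) / (2 * u) := by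
    rw [Real.sinh_eq, Real.exp_neg, ← hu, div_eq_div_iff two_ne_zero (by positivity)]
    field_simp
  have hsb : Real.sinh (b / 2) = (v * v - 1) / (2 * v) := by
    rw [Real.sinh_eq, Real.exp_neg, ← hv, div_eq_div_iff two_ne_zero (by positivity)]
    field_simp
  rw [hsa, hsb] at hsinh
  -- clear denominators: a * (v*v-1) * u < b * (u*u-1) * v
  have hkey : a * (v * v - 1) * u < b * (u * u - 1) * v := by
    have e1 : a / 2 * ((v * v - 1) / (2 * v)) = a * (v * v - 1) / (4 * v) := by ring
    have e2 : b / 2 * ((u * u - 1) / (2 * u)) = b * (u * u - 1) / (4 * u) := by ring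
    rw [e1, e2, div_lt_div_iff₀ (by positivity) (by positivity)] at hsinh
    nlinarith
  have hkeypos : 0 < a * (v * v - 1) * u := by
    have h1 : 0 < v * v - 1 := by nlinarith
    exact mul_pos (mul_pos ha0 h1) hu0
  -- squared version: a^2 * A * (B-1)^2 < b^2 * B * (A-1)^2
  have hsq : a ^ 2 * A * (B - 1) ^ 2 < b ^ 2 * B * (A - 1) ^ 2 := by
    have h := mul_self_lt_mul_self hkeypos.le hkey
    have e1 : a ^ 2 * A * (B - 1) ^ 2 = (a * (v * v - 1) * u) * (a * (v * v - 1) * u) := by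
      rw [hAu, hBv]; ring
    have e2 : b ^ 2 * B * (A - 1) ^ 2 = (b * (u * u - 1) * v) * (b * (u * u - 1) * v) := by
      rw [hAu, hBv]; ring
    rw [e1, e2]; exact h
  -- translate a, b back
  have haω : a * k = ω := by rw [ha]; field_simp
  have hbω : b * k = ω - 1 := by rw [hb]; field_simp
  have hsq2 : ω ^ 2 * A * (B - 1) ^ 2 < (ω - 1) ^ 2 * B * (A - 1) ^ 2 := by
    rw [← hbω, ← haω]
    have hk2 : 0 < k ^ 2 := by positivity
    calc (a * k) ^ 2 * A * (B - 1) ^ 2 = k ^ 2 * (a ^ 2 * A * (B - 1) ^ 2) := by ring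
      _ < k ^ 2 * (b ^ 2 * B * (A - 1) ^ 2) := by exact mul_lt_mul_of_pos_left hsq hk2
      _ = (b * k) ^ 2 * B * (A - 1) ^ 2 := by ring
  have hA1 : 1 < A := by
    rw [hAu]
    exact lt_of_lt_of_le hu1 (le_mul_of_one_le_left hu0.le hu1.le)
  have hB1 : 1 < B := by
    rw [hBv]
    exact lt_of_lt_of_le hv1 (le_mul_of_one_le_left hv0.le hv1.le)
  have hμω : μs * ω ≤ 1 := by
    have h := mul_le_mul_of_nonneg_right hhigh hω0.le
    rwa [one_div, inv_mul_cancel₀ hω0.ne'] at h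
  have h1μ : (ω - 1) / ω ≤ 1 - μs := by
    rw [div_le_iff₀ hω0]; linarith [hμω]
  have hfinal : ω * A * (B - 1) ^ 2 < (1 - μs) * (ω - 1) * B * (A - 1) ^ 2 := by
    have h2 : (ω - 1) / ω * (ω - 1) * B * (A - 1) ^ 2 ≤ (1 - μs) * (ω - 1) * B * (A - 1) ^ 2 := by
      apply mul_le_mul_of_nonneg_right _ (by positivity)
      apply mul_le_mul_of_nonneg_right _ (by linarith)
      exact mul_le_mul_of_nonneg_right h1μ (by linarith)
    have h3 : ω * A * (B - 1) ^ 2 < (ω - 1) / ω * (ω - 1) * B * (A - 1) ^ 2 := by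
      rw [div_mul_eq_mul_div, div_mul_eq_mul_div, div_mul_eq_mul_div, lt_div_iff₀ hω0]
      calc ω * A * (B - 1) ^ 2 * ω = ω ^ 2 * A * (B - 1) ^ 2 := by ring
        _ < (ω - 1) ^ 2 * B * (A - 1) ^ 2 := hsq2
        _ = (ω - 1) * (ω - 1) * B * (A - 1) ^ 2 := by ring
    linarith
  have hk2 : 0 < k ^ 2 := by positivity
  rw [sub_pos, div_lt_div_iff₀ (mul_pos hk2 (pow_pos (by linarith : (0:ℝ) < A - 1) 2))
    (mul_pos hk2 (pow_pos (by linarith : (0:ℝ) < B - 1) 2))]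
  calc ω * A * (k ^ 2 * (B - 1) ^ 2) = k ^ 2 * (ω * A * (B - 1) ^ 2) := by ring
    _ < k ^ 2 * ((1 - μs) * (ω - 1) * B * (A - 1) ^ 2) := by
        exact mul_lt_mul_of_pos_left hfinal hk2
    _ = (1 - μs) * (ω - 1) * B * (k ^ 2 * (A - 1) ^ 2) := by ring
end

section
/- For k > 0 and ω > 1, with A = exp(ω/k) and B = exp((ω−1)/k), if 1 − μ* ≥ ln(B)/ln(A), then (1−μ*)·ln(B)·B/(B−1)² > ln(A)·A/(A−1)². -/
lemma aux_sinh_lt (x : ℝ) (hx : 0 < x) : Real.sinh x < x * Real.cosh x := by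
  have key : StrictMonoOn (fun t => t * Real.cosh t - Real.sinh t) (Set.Ici 0) := by
    apply strictMonoOn_of_deriv_pos (convex_Ici 0)
    · exact (Continuous.sub (continuous_id.mul Real.continuous_cosh) Real.continuous_sinh).continuousOn
    · intro t ht
      rw [interior_Ici, Set.mem_Ioi] at ht
      have h1 : HasDerivAt (fun t => t * Real.cosh t - Real.sinh t)
          (1 * Real.cosh t + t * Real.sinh t - Real.cosh t) t :=
        ((hasDerivAt_id t).mul (Real.hasDerivAt_cosh t)).sub (Real.hasDerivAt_sinh t)
      rw [h1.deriv]
      have := Real.sinh_pos_iff.2 ht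
      nlinarith
  have := key (Set.self_mem_Ici) (Set.mem_Ici.2 hx.le) hx
  simpa using this

lemma aux_sinh_div (x y : ℝ) (hx : 0 < x) (hxy : x < y) :
    y * Real.sinh x < x * Real.sinh y := by
  have key : StrictMonoOn (fun t => x * Real.sinh t - t * Real.sinh x) (Set.Ici x) := by
    apply strictMonoOn_of_deriv_pos (convex_Ici x)
    · exact (Continuous.sub (continuous_const.mul Real.continuous_sinh)
        (continuous_id.mul continuous_const)).continuousOn
    · intro t ht
      rw [interior_Ici, Set.mem_Ioi] at ht
      have h1 : HasDerivAt (fun t => x * Real.sinh t - t * Real.sinh x)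
          (x * Real.cosh t - 1 * Real.sinh x) t :=
        ((Real.hasDerivAt_sinh t).const_mul x).sub ((hasDerivAt_id t).mul_const _)
      rw [h1.deriv]
      have hcc : Real.cosh x < Real.cosh t := by
        rw [Real.cosh_lt_cosh]
        rw [abs_of_pos hx, abs_of_pos (hx.trans ht)]
        exact ht
      have := aux_sinh_lt x hx
      nlinarith
  have := key (Set.self_mem_Ici) (Set.mem_Ici.2 hxy.le) hxy
  simp only [sub_self] at this
  nlinarith [this]

lemma aux_sq (x : ℝ) : (Real.exp x - 1)^2 = Real.exp x * (2 * Real.sinh (x/2))^2 := by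
  have e1 : Real.exp (x/2) * Real.exp (x/2) = Real.exp x := by
    rw [← Real.exp_add]; ring_nf
  have e2 : Real.exp (x/2) * Real.exp (-(x/2)) = 1 := by
    rw [← Real.exp_add]; simp
  rw [Real.sinh_eq]
  nlinarith [e1, e2]

theorem stmt_3 (ω k μs : ℝ) (hω : 1 < ω) (hk : 0 < k) (hμ : μs ∈ Set.Ioo (0:ℝ) 1)
    (A B : ℝ) (hA : A = Real.exp (ω / k)) (hB : B = Real.exp ((ω - 1) / k))
    (h : 1 - μs ≥ Real.log B / Real.log A) :
    (1 - μs) * Real.log B * B / (B - 1) ^ 2 > Real.log A * A / (A - 1) ^ 2 := by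
  set a := ω / k with ha'
  set b := (ω - 1) / k with hb'
  have ha0 : 0 < a := div_pos (by linarith) hk
  have hb : 0 < b := div_pos (by linarith) hk
  have hab : b < a := by rw [ha', hb', div_lt_div_iff₀ hk hk]; nlinarith
  have hlogA : Real.log A = a := by rw [hA, Real.log_exp]
  have hlogB : Real.log B = b := by rw [hB, Real.log_exp]
  clear_value a b
  have hA1 : 1 < A := by rw [hA]; exact Real.one_lt_exp_iff.2 ha0
  have hB1 : 1 < B := by rw [hB]; exact Real.one_lt_exp_iff.2 hb
  rw [hlogA, hlogB]
  have hkey : a * Real.sinh (b/2) < b * Real.sinh (a/2) := by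
    have := aux_sinh_div (b/2) (a/2) (by linarith) (by linarith)
    linarith
  have hsb : 0 < Real.sinh (b/2) := Real.sinh_pos_iff.2 (by linarith)
  have hsa : 0 < Real.sinh (a/2) := Real.sinh_pos_iff.2 (by linarith)
  have core : a^2 * Real.sinh (b/2)^2 < b^2 * Real.sinh (a/2)^2 := by
    nlinarith [mul_pos (sub_pos.2 hkey) (add_pos (mul_pos ha0 hsb) (mul_pos hb hsa))]
  have h2 : a * A / (A - 1)^2 < (b/a) * b * B / (B - 1)^2 := by
    rw [div_lt_div_iff₀ (pow_pos (by linarith) 2) (pow_pos (by linarith) 2)]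
    rw [hA, hB, aux_sq a, aux_sq b]
    have hea : 0 < Real.exp a := Real.exp_pos a
    have heb : 0 < Real.exp b := Real.exp_pos b
    rw [div_mul_eq_mul_div, div_mul_eq_mul_div, div_mul_eq_mul_div, lt_div_iff₀ ha0]
    have hprod : 0 < (Real.exp a * Real.exp b) *
        (b^2 * Real.sinh (a/2)^2 - a^2 * Real.sinh (b/2)^2) :=
      mul_pos (mul_pos hea heb) (sub_pos.2 core)
    nlinarith [hprod]
  have h3 : (b/a) * b * B / (B - 1)^2 ≤ (1 - μs) * b * B / (B - 1)^2 := by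
    have hba : b/a ≤ 1 - μs := by rw [← hlogA, ← hlogB]; exact h
    have hBpos : (0:ℝ) < B := by linarith
    gcongr
  linarith
end
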